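/- If $u \sim \mathcal{E}(\mu_1)$, $v \sim \mathcal{E}(\mu_2)$, and $z \sim \mathcal{E}(1)$ are independent exponential random variables, then the random variable $W_1 = \frac{u z}{u+v}$ has cumulative distribution function $F_{W_1}(w) = 1 - e^{-w}\left[1 - \frac{\mu_1}{\mu_2} w \, \Psi\left(1,1,\frac{\mu_1}{\mu_2} w\right)\right]$ for $w \ge 0$, where $\Psi(a,b,x)$ is the Tricomi confluent hypergeometric function. -/

import Mathlib

open MeasureTheory ProbabilityTheory

/-- The Tricomi confluent hypergeometric function `Ψ(1,1,x)`, via its standard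
integral representation `Ψ(1,1,x) = ∫₀^∞ e^{-x t} / (1+t) dt` (equal to `e^x E₁(x)`). -/
noncomputable def tricomiU11 (x : ℝ) : ℝ :=
  ∫ t in Set.Ioi (0 : ℝ), Real.exp (-(x * t)) / (1 + t)

open Set Real
open scoped ENNReal

section cdfW1Helpers


lemma expMeasure_eq_withDensity (r : ℝ) :
    expMeasure r = volume.withDensity (exponentialPDF r) := rfl

lemma aux_integral_exp_neg_mul_Ioi {c : ℝ} (hc : 0 < c) :
    ∫ x in Ioi (0:ℝ), rexp (-(c * x)) = c⁻¹ := by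
  have h := integral_comp_mul_left_Ioi (fun x => rexp (-x)) 0 hc
  simp only [mul_zero, integral_exp_neg_Ioi, neg_zero, exp_zero, smul_eq_mul, mul_one] at h
  exact h

lemma expMeasure_Iic {r c : ℝ} (hr : 0 < r) (hc : 0 ≤ c) :
    expMeasure r (Iic c) = ENNReal.ofReal (1 - rexp (-(r * c))) := by
  rw [expMeasure_eq_withDensity, withDensity_apply _ measurableSet_Iic,
    lintegral_exponentialPDF_eq_antiDeriv hr, if_pos hc]

lemma expMeasure_Ioi {r c : ℝ} (hr : 0 < r) (hc : 0 ≤ c) :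
    expMeasure r (Ioi c) = ENNReal.ofReal (rexp (-(r * c))) := by
  haveI : IsProbabilityMeasure (expMeasure r) := isProbabilityMeasure_expMeasure hr
  rw [← compl_Iic, measure_compl measurableSet_Iic (measure_ne_top _ _), measure_univ,
    expMeasure_Iic hr hc, ← ENNReal.ofReal_one,
    ← ENNReal.ofReal_sub _ (by simp only [sub_nonneg, exp_le_one_iff]; exact neg_nonpos.mpr (by positivity))]
  norm_num

lemma expMeasure_Iic_zero {r : ℝ} (hr : 0 < r) : expMeasure r (Iic 0) = 0 := by
  rw [expMeasure_Iic hr le_rfl]; simp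

lemma expMeasure_pos_ae {r : ℝ} (hr : 0 < r) : ∀ᵐ x ∂(expMeasure r), 0 < x := by
  rw [ae_iff]
  have h2 : {x : ℝ | ¬ 0 < x} = Iic 0 := by ext x; simp
  rw [h2, expMeasure_Iic_zero hr]

lemma lintegral_expMeasure {r : ℝ} (g : ℝ → ℝ≥0∞) (hg : Measurable g) :
    ∫⁻ x, g x ∂(expMeasure r)
      = ∫⁻ x in Ioi 0, ENNReal.ofReal (r * rexp (-(r * x))) * g x := by
  have hmeas : Measurable (exponentialPDF r) :=
    (measurable_exponentialPDFReal r).ennreal_ofReal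
  rw [expMeasure_eq_withDensity, lintegral_withDensity_eq_lintegral_mul _ hmeas hg]
  have h0 : ∀ᵐ x : ℝ, x ≠ 0 := by
    rw [ae_iff]; simpa using measure_singleton (0:ℝ)
  rw [← lintegral_indicator measurableSet_Ioi]
  refine lintegral_congr_ae (h0.mono fun x hx => ?_)
  rcases lt_or_gt_of_ne hx with h | h
  · simp [Set.indicator_of_notMem (notMem_Ioi.2 h.le), exponentialPDF_of_neg h]
  · simp [Set.indicator_of_mem (mem_Ioi.2 h), exponentialPDF_of_nonneg h.le]

lemma integrableOn_exp_neg_mul {b : ℝ} (hb : 0 < b) (c : ℝ) :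
    IntegrableOn (fun x => c * rexp (-(b * x))) (Ioi 0) := by
  have := (exp_neg_integrableOn_Ioi 0 hb).const_mul c
  simp only [neg_mul] at this; exact this

lemma integrableOn_exp_mul_bounded {μ₁ : ℝ} (hμ₁ : 0 < μ₁) {g : ℝ → ℝ}
    (hg : Measurable g) (h0 : ∀ x ∈ Ioi (0:ℝ), 0 ≤ g x) (h1 : ∀ x ∈ Ioi (0:ℝ), g x ≤ 1) :
    IntegrableOn (fun x => μ₁ * rexp (-(μ₁ * x)) * g x) (Ioi 0) := by
  refine Integrable.mono (integrableOn_exp_neg_mul hμ₁ μ₁)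
    (((measurable_const.mul (by fun_prop)).mul hg).aestronglyMeasurable) ?_
  filter_upwards [ae_restrict_mem measurableSet_Ioi] with x hx
  have hp : (0:ℝ) < μ₁ * rexp (-(μ₁ * x)) := by positivity
  rw [Real.norm_eq_abs, Real.norm_eq_abs,
    abs_of_nonneg (mul_nonneg hp.le (h0 x hx)), abs_of_nonneg hp.le]
  nlinarith [h0 x hx, h1 x hx]

lemma ratio_nonneg {μ₂ w x : ℝ} (hμ₂ : 0 < μ₂) (hw : 0 ≤ w) (hx : 0 < x) :
    0 ≤ w / (μ₂ * x + w) := by positivity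

lemma ratio_le_one {μ₂ w x : ℝ} (hμ₂ : 0 < μ₂) (hw : 0 ≤ w) (hx : 0 < x) :
    w / (μ₂ * x + w) ≤ 1 := by
  rcases eq_or_lt_of_le hw with h | h
  · simp [← h]
  · rw [div_le_one (by positivity)]; nlinarith

lemma integrableOn_exp_ratio {μ₁ μ₂ w : ℝ} (hμ₁ : 0 < μ₁) (hμ₂ : 0 < μ₂) (hw : 0 ≤ w) :
    IntegrableOn (fun x => μ₁ * rexp (-(μ₁ * x)) * (w / (μ₂ * x + w))) (Ioi 0) :=
  integrableOn_exp_mul_bounded hμ₁ (measurable_const.div (by fun_prop))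
    (fun x hx => ratio_nonneg hμ₂ hw hx) (fun x hx => ratio_le_one hμ₂ hw hx)

lemma ratio2_nonneg {μ₂ w x : ℝ} (hμ₂ : 0 < μ₂) (hw : 0 ≤ w) (hx : 0 < x) :
    0 ≤ rexp (-w) * (μ₂ * x / (μ₂ * x + w)) := by positivity

lemma ratio2_le_one {μ₂ w x : ℝ} (hμ₂ : 0 < μ₂) (hw : 0 ≤ w) (hx : 0 < x) :
    rexp (-w) * (μ₂ * x / (μ₂ * x + w)) ≤ 1 := by
  have h1 : rexp (-w) ≤ 1 := by
    rw [exp_le_one_iff]; linarith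
  have h2 : μ₂ * x / (μ₂ * x + w) ≤ 1 := by
    rw [div_le_one (by positivity)]; linarith
  have h3 : 0 ≤ μ₂ * x / (μ₂ * x + w) := by positivity
  nlinarith [exp_pos (-w)]

lemma integrableOn_exp_ratio2 {μ₁ μ₂ w : ℝ} (hμ₁ : 0 < μ₁) (hμ₂ : 0 < μ₂) (hw : 0 ≤ w) :
    IntegrableOn
      (fun x => μ₁ * rexp (-(μ₁ * x)) * (rexp (-w) * (μ₂ * x / (μ₂ * x + w)))) (Ioi 0) :=
  integrableOn_exp_mul_bounded hμ₁ (by fun_prop)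
    (fun x hx => ratio2_nonneg hμ₂ hw hx) (fun x hx => ratio2_le_one hμ₂ hw hx)

lemma base_integral {μ₁ : ℝ} (hμ₁ : 0 < μ₁) :
    ∫ x in Ioi (0:ℝ), μ₁ * rexp (-(μ₁ * x)) = 1 := by
  rw [integral_const_mul, aux_integral_exp_neg_mul_Ioi hμ₁, mul_inv_cancel₀ hμ₁.ne']


lemma sub_integral {μ₁ μ₂ w : ℝ} (hμ₁ : 0 < μ₁) (hμ₂ : 0 < μ₂) (hw : 0 < w) :
    ∫ x in Ioi (0:ℝ), μ₁ * rexp (-(μ₁ * x)) * (w / (μ₂ * x + w))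
      = (μ₁/μ₂) * w * tricomiU11 ((μ₁/μ₂) * w) := by
  have hc : 0 < w / μ₂ := by positivity
  have h := integral_comp_mul_left_Ioi
    (fun x => μ₁ * rexp (-(μ₁ * x)) * (w / (μ₂ * x + w))) 0 hc
  simp only [mul_zero, smul_eq_mul] at h
  have hL : ∫ x in Ioi (0:ℝ), μ₁ * rexp (-(μ₁ * (w / μ₂ * x))) * (w / (μ₂ * (w / μ₂ * x) + w))
      = μ₁ * tricomiU11 ((μ₁/μ₂) * w) := by
    rw [tricomiU11, ← integral_const_mul]
    refine setIntegral_congr_fun measurableSet_Ioi fun x hx => ?_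
    have hx0 : (0:ℝ) < x := hx
    have h1 : μ₂ * (w / μ₂ * x) + w = w * (1 + x) := by field_simp; ring
    have h2 : μ₁ * (w / μ₂ * x) = μ₁ / μ₂ * w * x := by field_simp
    rw [h1, h2, show w / (w * (1 + x)) = 1 / (1 + x) from by
      rw [div_mul_eq_div_div, div_self hw.ne']]
    ring
  have hB : ∫ x in Ioi (0:ℝ), μ₁ * rexp (-(μ₁ * x)) * (w / (μ₂ * x + w))
      = (w / μ₂) * (μ₁ * tricomiU11 ((μ₁/μ₂) * w)) := by
    rw [← hL, h, ← mul_assoc, mul_inv_cancel₀ hc.ne', one_mul]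
  rw [hB]; ring

lemma key_integral {μ₁ μ₂ w : ℝ} (hμ₁ : 0 < μ₁) (hμ₂ : 0 < μ₂) (hw : 0 ≤ w) :
    ∫ x in Ioi (0:ℝ), μ₁ * rexp (-(μ₁ * x)) * (μ₂ * x / (μ₂ * x + w))
      = 1 - (μ₁/μ₂) * w * tricomiU11 ((μ₁/μ₂) * w) := by
  rcases eq_or_lt_of_le hw with h | hw'
  · subst h
    simp only [mul_zero, zero_mul, zero_div, sub_zero, add_zero]
    rw [← base_integral hμ₁]
    refine setIntegral_congr_fun measurableSet_Ioi fun x hx => ?_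
    have hx0 : (0:ℝ) < x := hx
    rw [div_self (by positivity), mul_one]
  · have hsplit : ∫ x in Ioi (0:ℝ), μ₁ * rexp (-(μ₁ * x)) * (μ₂ * x / (μ₂ * x + w))
        = ∫ x in Ioi (0:ℝ), (μ₁ * rexp (-(μ₁ * x)) - μ₁ * rexp (-(μ₁ * x)) * (w / (μ₂ * x + w))) := by
      refine setIntegral_congr_fun measurableSet_Ioi fun x hx => ?_
      have hx0 : (0:ℝ) < x := hx
      have hd : μ₂ * x + w ≠ 0 := by positivity
      field_simp
      ring
    rw [hsplit, integral_sub (integrableOn_exp_neg_mul hμ₁ μ₁)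
      (integrableOn_exp_ratio hμ₁ hμ₂ hw), base_integral hμ₁, sub_integral hμ₁ hμ₂ hw']

lemma inner_lintegral {μ₂ w x : ℝ} (hμ₂ : 0 < μ₂) (hw : 0 ≤ w) (hx : 0 < x) :
    ∫⁻ y, ENNReal.ofReal (rexp (-(w * (x + y) / x))) ∂(expMeasure μ₂)
      = ENNReal.ofReal (rexp (-w) * (μ₂ * x / (μ₂ * x + w))) := by
  have hc : 0 < μ₂ + w / x := by positivity
  rw [lintegral_expMeasure _ (by fun_prop)]
  have hpoint : ∀ y : ℝ,
      μ₂ * rexp (-(μ₂ * y)) * rexp (-(w * (x + y) / x))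
        = (rexp (-w) * μ₂) * rexp (-((μ₂ + w / x) * y)) := by
    intro y
    rw [mul_assoc, ← Real.exp_add, mul_comm (rexp (-w)) μ₂, mul_assoc, ← Real.exp_add]
    congr 1
    field_simp
    ring
  calc ∫⁻ y in Ioi 0, ENNReal.ofReal (μ₂ * rexp (-(μ₂ * y)))
          * ENNReal.ofReal (rexp (-(w * (x + y) / x)))
      = ∫⁻ y in Ioi 0, ENNReal.ofReal ((rexp (-w) * μ₂) * rexp (-((μ₂ + w / x) * y))) := by
        refine lintegral_congr fun y => ?_
        rw [← ENNReal.ofReal_mul (by positivity), hpoint y]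
    _ = ENNReal.ofReal (∫ y in Ioi 0, (rexp (-w) * μ₂) * rexp (-((μ₂ + w / x) * y))) := by
        rw [MeasureTheory.ofReal_integral_eq_lintegral_ofReal
          (integrableOn_exp_neg_mul hc _) (ae_of_all _ fun y => by positivity)]
    _ = ENNReal.ofReal (rexp (-w) * (μ₂ * x / (μ₂ * x + w))) := by
        rw [integral_const_mul, aux_integral_exp_neg_mul_Ioi hc]
        congr 1
        rw [mul_assoc]
        congr 1
        field_simp

end cdfW1Helpers

/-- If `u ~ Exp(μ₁)`, `v ~ Exp(μ₂)`, `z ~ Exp(1)` are independent exponential random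
variables, then `W₁ = uز/(u+v)` has cdf
`F(w) = 1 - e^{-w} [1 - (μ₁/μ₂) w Ψ(1,1,(μ₁/μ₂) w)]` for `w ≥ 0`. -/
theorem cdf_W1_tricomi
    {Ω : Type*} [MeasureSpace Ω] [IsProbabilityMeasure (ℙ : Measure Ω)]
    (μ₁ μ₂ : ℝ) (hμ₁ : 0 < μ₁) (hμ₂ : 0 < μ₂)
    (u v z : Ω → ℝ)
    (hu : Measure.map u ℙ = expMeasure μ₁)
    (hv : Measure.map v ℙ = expMeasure μ₂)
    (hz : Measure.map z ℙ = expMeasure 1)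
    (hmu : Measurable u) (hmv : Measurable v) (hmz : Measurable z)
    (hindep : iIndepFun ![u, v, z] ℙ) :
    ∀ w : ℝ, 0 ≤ w →
      (ℙ {ω | u ω * z ω / (u ω + v ω) ≤ w}).toReal =
        1 - Real.exp (-w) * (1 - (μ₁ / μ₂) * w * tricomiU11 ((μ₁ / μ₂) * w)) := by
  intro w hw
  haveI i1 : IsProbabilityMeasure (expMeasure μ₁) := isProbabilityMeasure_expMeasure hμ₁
  haveI i2 : IsProbabilityMeasure (expMeasure μ₂) := isProbabilityMeasure_expMeasure hμ₂
  haveI i3 : IsProbabilityMeasure (expMeasure 1) := isProbabilityMeasure_expMeasure one_pos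
  have hmeasvec : ∀ i, Measurable (![u, v, z] i) := by
    intro i; fin_cases i <;> assumption
  have huv : IndepFun u v ℙ := hindep.indepFun (show (0 : Fin 3) ≠ 1 by decide)
  have hpz : IndepFun (fun ω => (u ω, v ω)) z ℙ :=
    hindep.indepFun_prodMk hmeasvec 0 1 2 (by decide) (by decide)
  have hmapuv : Measure.map (fun ω => (u ω, v ω)) ℙ
      = (expMeasure μ₁).prod (expMeasure μ₂) := by
    rw [(indepFun_iff_map_prod_eq_prod_map_map hmu.aemeasurable hmv.aemeasurable).mp huv,
      hu, hv]
  have hmap : Measure.map (fun ω => ((u ω, v ω), z ω)) ℙ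
      = ((expMeasure μ₁).prod (expMeasure μ₂)).prod (expMeasure 1) := by
    rw [(indepFun_iff_map_prod_eq_prod_map_map
      (hmu.prodMk hmv).aemeasurable hmz.aemeasurable).mp hpz, hmapuv, hz]
  set ν := (expMeasure μ₁).prod (expMeasure μ₂) with hν
  set S : Set ((ℝ × ℝ) × ℝ) := {p | w < p.1.1 * p.2 / (p.1.1 + p.1.2)} with hS
  have hSmeas : MeasurableSet S :=
    measurableSet_lt measurable_const
      ((measurable_fst.fst.mul measurable_snd).div (measurable_fst.fst.add measurable_fst.snd))
  -- the value of the product measure on S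
  have haepos : ∀ᵐ p ∂ν, 0 < p.1 ∧ 0 < p.2 := by
    rw [ae_iff]
    have hsub : {p : ℝ × ℝ | ¬(0 < p.1 ∧ 0 < p.2)}
        ⊆ (Iic 0 ×ˢ univ) ∪ (univ ×ˢ Iic 0) := by
      intro p hp
      simp only [mem_setOf_eq, not_and_or, not_lt] at hp
      rcases hp with h | h
      · exact Or.inl ⟨h, mem_univ _⟩
      · exact Or.inr ⟨mem_univ _, h⟩
    refine measure_mono_null hsub (measure_union_null ?_ ?_)
    · rw [hν, Measure.prod_prod, expMeasure_Iic_zero hμ₁, zero_mul]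
    · rw [hν, Measure.prod_prod, expMeasure_Iic_zero hμ₂, mul_zero]
  have hval : (ν.prod (expMeasure 1)) S
      = ENNReal.ofReal (∫ x in Ioi (0:ℝ),
          μ₁ * rexp (-(μ₁ * x)) * (rexp (-w) * (μ₂ * x / (μ₂ * x + w)))) := by
    rw [Measure.prod_apply hSmeas]
    have hcongr : ∀ᵐ p ∂ν, expMeasure 1 (Prod.mk p ⁻¹' S)
        = ENNReal.ofReal (rexp (-(w * (p.1 + p.2) / p.1))) := by
      filter_upwards [haepos] with p hp
      obtain ⟨h1, h2⟩ := hp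
      have hpre : Prod.mk p ⁻¹' S = Ioi (w * (p.1 + p.2) / p.1) := by
        ext t
        simp only [hS, mem_preimage, mem_setOf_eq, mem_Ioi]
        rw [lt_div_iff₀ (by positivity), div_lt_iff₀ h1]
        constructor <;> intro h <;> nlinarith
      rw [hpre, expMeasure_Ioi one_pos (by positivity), one_mul]
    rw [lintegral_congr_ae hcongr]
    rw [hν, lintegral_prod _ (by fun_prop)]
    have hinner : ∀ᵐ x ∂(expMeasure μ₁),
        (∫⁻ y, ENNReal.ofReal (rexp (-(w * (x + y) / x))) ∂(expMeasure μ₂))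
          = ENNReal.ofReal (rexp (-w) * (μ₂ * x / (μ₂ * x + w))) := by
      filter_upwards [expMeasure_pos_ae hμ₁] with x hx
      exact inner_lintegral hμ₂ hw hx
    rw [lintegral_congr_ae hinner, lintegral_expMeasure _ (by fun_prop)]
    rw [MeasureTheory.ofReal_integral_eq_lintegral_ofReal
      (integrableOn_exp_ratio2 hμ₁ hμ₂ hw) ?_]
    · refine lintegral_congr fun x => ?_
      rw [← ENNReal.ofReal_mul (by positivity)]
    · filter_upwards [ae_restrict_mem measurableSet_Ioi] with x hx
      have hx0 : (0:ℝ) < x := hx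
      have : (0:ℝ) < μ₂ * x + w := by positivity
      positivity
  -- final assembly
  have hI : ∫ x in Ioi (0:ℝ), μ₁ * rexp (-(μ₁ * x)) * (rexp (-w) * (μ₂ * x / (μ₂ * x + w)))
      = rexp (-w) * (1 - (μ₁ / μ₂) * w * tricomiU11 ((μ₁ / μ₂) * w)) := by
    have hre : (fun x => μ₁ * rexp (-(μ₁ * x)) * (rexp (-w) * (μ₂ * x / (μ₂ * x + w))))
        = fun x => rexp (-w) * (μ₁ * rexp (-(μ₁ * x)) * (μ₂ * x / (μ₂ * x + w))) :=
      funext fun x => by ring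
    rw [hre, integral_const_mul, key_integral hμ₁ hμ₂ hw]
  have hI0 : 0 ≤ ∫ x in Ioi (0:ℝ),
      μ₁ * rexp (-(μ₁ * x)) * (rexp (-w) * (μ₂ * x / (μ₂ * x + w))) := by
    refine setIntegral_nonneg measurableSet_Ioi fun x hx => ?_
    have hx0 : (0:ℝ) < x := hx
    have : (0:ℝ) < μ₂ * x + w := by positivity
    positivity
  have hAmeas : MeasurableSet {ω | w < u ω * z ω / (u ω + v ω)} :=
    measurableSet_lt measurable_const ((hmu.mul hmz).div (hmu.add hmv))
  have hPA : ℙ {ω | w < u ω * z ω / (u ω + v ω)} = (ν.prod (expMeasure 1)) S := by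
    rw [← hmap, Measure.map_apply ((hmu.prodMk hmv).prodMk hmz) hSmeas]
    rfl
  have hAcompl : {ω | u ω * z ω / (u ω + v ω) ≤ w}
      = {ω | w < u ω * z ω / (u ω + v ω)}ᶜ := by
    ext ω; simp [not_lt]
  have hle : ENNReal.ofReal (∫ x in Ioi (0:ℝ),
      μ₁ * rexp (-(μ₁ * x)) * (rexp (-w) * (μ₂ * x / (μ₂ * x + w)))) ≤ 1 := by
    rw [← hval]; exact prob_le_one
  rw [hAcompl, measure_compl hAmeas (measure_ne_top _ _), measure_univ, hPA, hval,
    ENNReal.toReal_sub_of_le hle ENNReal.one_ne_top, ENNReal.toReal_one,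
    ENNReal.toReal_ofReal hI0, hI]
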